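/- arXiv:2512.04584 — 5 statements merged into one kernel-verified Lean document; each statement's English description precedes it below -/
import Mathlib

section
/- For every integer n ≥ 3 and every real x ∈ [0,1], one has (1+x)^((n-2)/n) ≤ 1 + ((n-2)/n)·x − ((n-2)/(4n²))·x². -/
open Real

set_option maxHeartbeats 1000000 in
theorem stmt_0 (n : ℕ) (hn : 3 ≤ n) (x : ℝ) (hx0 : 0 ≤ x) (hx1 : x ≤ 1) :
    (1 + x) ^ (((n : ℝ) - 2) / n) ≤
      1 + ((n : ℝ) - 2) / n * x - ((n : ℝ) - 2) / (4 * (n : ℝ) ^ 2) * x ^ 2 := by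
  have hn3 : (3 : ℝ) ≤ (n : ℝ) := by exact_mod_cast hn
  have hnpos : (0 : ℝ) < n := by linarith
  set p : ℝ := ((n : ℝ) - 2) / n with hp
  set c : ℝ := ((n : ℝ) - 2) / (4 * (n : ℝ) ^ 2) with hc
  have hp0 : 0 < p := div_pos (by linarith) hnpos
  have hp1 : p ≤ 1 := by rw [hp, div_le_one hnpos]; linarith
  have hpm : p - 1 = -(2 / (n:ℝ)) := by rw [hp]; field_simp; ring
  -- key pointwise bound on (1+y)^(p-1)
  have key : ∀ y : ℝ, 0 ≤ y → y ≤ 1 → (1 + y) ^ (p - 1) ≤ 1 - y / (2 * (n:ℝ)) := by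
    intro y hy0 hy1
    have hbase : (0 : ℝ) < 1 + y := by linarith
    have ht0 : (0 : ℝ) ≤ 1 - 2 / (n:ℝ) := by
      rw [sub_nonneg, div_le_one hnpos]; linarith
    have ht1 : 1 - 2 / (n:ℝ) ≤ 1 := by
      have : (0 : ℝ) < 2 / (n:ℝ) := by positivity
      linarith
    -- Bernoulli: (1+y)^(1-2/n) ≤ 1 + (1-2/n) y
    have hb : (1 + y) ^ (1 - 2 / (n:ℝ)) ≤ 1 + (1 - 2 / (n:ℝ)) * y :=
      rpow_one_add_le_one_add_mul_self (by linarith) ht0 ht1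
    have hden : (0 : ℝ) < 1 + (1 - 2 / (n:ℝ)) * y := by nlinarith
    have hpow_pos : (0 : ℝ) < (1 + y) ^ (1 - 2 / (n:ℝ)) := rpow_pos_of_pos hbase _
    -- (1+y)^(2/n) ≥ 1 + y/n
    have hsum : (1 + y) ^ (2 / (n:ℝ)) * (1 + y) ^ (1 - 2 / (n:ℝ)) = 1 + y := by
      rw [← Real.rpow_add hbase]
      norm_num
    have hA : 1 + y / (n:ℝ) ≤ (1 + y) ^ (2 / (n:ℝ)) := by
      have h3 : (1 + y / (n:ℝ)) * (1 + (1 - 2 / (n:ℝ)) * y) ≤ 1 + y := by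
        have hexp : (1 + y / (n:ℝ)) * (1 + (1 - 2 / (n:ℝ)) * y) =
            1 + y + (y * (y - 1) * (n:ℝ) - 2 * y ^ 2) / (n:ℝ) ^ 2 := by
          field_simp
          ring
        have hnum : y * (y - 1) * (n:ℝ) - 2 * y ^ 2 ≤ 0 := by
          have h1 : y * (y - 1) ≤ 0 := mul_nonpos_of_nonneg_of_nonpos hy0 (by linarith)
          have h2 : y * (y - 1) * (n:ℝ) ≤ 0 := mul_nonpos_of_nonpos_of_nonneg h1 hnpos.le
          nlinarith [sq_nonneg y]
        have : (y * (y - 1) * (n:ℝ) - 2 * y ^ 2) / (n:ℝ) ^ 2 ≤ 0 :=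
          div_nonpos_of_nonpos_of_nonneg hnum (by positivity)
        linarith [hexp ▸ le_refl ((1 + y / (n:ℝ)) * (1 + (1 - 2 / (n:ℝ)) * y)), this]
      calc 1 + y / (n:ℝ) ≤ (1 + y) / (1 + (1 - 2 / (n:ℝ)) * y) := by
            rw [le_div_iff₀ hden]; linarith
        _ ≤ (1 + y) / (1 + y) ^ (1 - 2 / (n:ℝ)) := by
            apply div_le_div_of_nonneg_left (by linarith) hpow_pos hb
        _ = (1 + y) ^ (2 / (n:ℝ)) := by
            rw [div_eq_iff hpow_pos.ne']
            exact hsum.symm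
    have hApos : (0 : ℝ) < 1 + y / (n:ℝ) := by positivity
    have hB : ((1 + y) ^ (2 / (n:ℝ)))⁻¹ ≤ (1 + y / (n:ℝ))⁻¹ :=
      inv_anti₀ hApos hA
    have hC : (1 + y / (n:ℝ))⁻¹ ≤ 1 - y / (2 * (n:ℝ)) := by
      rw [inv_eq_one_div, div_le_iff₀ hApos]
      have : y * (n:ℝ) ≥ y ^ 2 := by nlinarith
      have h2 : (1 - y / (2 * (n:ℝ))) * (1 + y / (n:ℝ)) = 1 + y / (2 * (n:ℝ)) - y ^ 2 / (2 * (n:ℝ) ^ 2) := by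
        field_simp
        ring
      rw [h2]
      have : y ^ 2 / (2 * (n:ℝ) ^ 2) ≤ y / (2 * (n:ℝ)) := by
        rw [div_le_div_iff₀ (by positivity) (by positivity)]
        nlinarith
      linarith
    calc (1 + y) ^ (p - 1) = ((1 + y) ^ (2 / (n:ℝ)))⁻¹ := by
          rw [hpm, Real.rpow_neg hbase.le]
      _ ≤ (1 + y / (n:ℝ))⁻¹ := hB
      _ ≤ 1 - y / (2 * (n:ℝ)) := hC
  -- the function g
  set g : ℝ → ℝ := fun y => 1 + p * y - c * y ^ 2 - (1 + y) ^ p with hg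
  have hderiv : ∀ y : ℝ, -1 < y →
      HasDerivAt g (p - 2 * c * y - 1 * p * (1 + y) ^ (p - 1)) y := by
    intro y hy
    have hne : (1 : ℝ) + y ≠ 0 := by linarith
    have h1 : HasDerivAt (fun y : ℝ => 1 + p * y - c * y ^ 2) (p - 2 * c * y) y := by
      have ha : HasDerivAt (fun y : ℝ => 1 + p * y) p y := by
        simpa using ((hasDerivAt_id y).const_mul p).const_add 1
      have hb : HasDerivAt (fun y : ℝ => c * y ^ 2) (c * (2 * y)) y := by
        simpa using (hasDerivAt_pow 2 y).const_mul c
      have : HasDerivAt (fun y : ℝ => 1 + p * y - c * y ^ 2) (p - c * (2 * y)) y := ha.sub hb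
      convert this using 1
      ring
    have h2 : HasDerivAt (fun y : ℝ => (1 + y) ^ p) (1 * p * (1 + y) ^ (p - 1)) y :=
      (((hasDerivAt_id y).const_add 1)).rpow_const (Or.inl hne)
    exact h1.sub h2
  have hmono : MonotoneOn g (Set.Icc (0 : ℝ) 1) := by
    apply monotoneOn_of_deriv_nonneg (convex_Icc 0 1)
    · intro y hy
      exact (hderiv y (by simp at hy; linarith [hy.1])).continuousAt.continuousWithinAt
    · intro y hy
      rw [interior_Icc] at hy
      exact ((hderiv y (by linarith [hy.1])).differentiableAt).differentiableWithinAt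
    · intro y hy
      rw [interior_Icc] at hy
      rw [(hderiv y (by linarith [hy.1])).deriv]
      have hk := key y hy.1.le hy.2.le
      have hmul : p * (1 + y) ^ (p - 1) ≤ p * (1 - y / (2 * (n:ℝ))) :=
        mul_le_mul_of_nonneg_left hk hp0.le
      have heq : p * (1 - y / (2 * (n:ℝ))) = p - 2 * c * y := by
        rw [hp, hc]
        field_simp
        ring
      rw [heq] at hmul
      linarith
  have hg0 : g 0 = 0 := by
    simp [hg, Real.one_rpow]
  have := hmono (Set.mem_Icc.mpr ⟨le_refl 0, by norm_num⟩) (Set.mem_Icc.mpr ⟨hx0, hx1⟩) hx0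
  rw [hg0] at this
  have hfin : (0:ℝ) ≤ 1 + p * x - c * x ^ 2 - (1 + x) ^ p := this
  linarith
end

section
/- Let R > 0, n ≥ 2 an integer, and β ∈ [0,2]. Set R₂ = R(1+β/2)^(1/n). Then for n ≥ 3, ∫_R^{R₂} (1/R² − 1/r²) r^{n−1} dr ≥ (1/(nR²))(R₂ⁿ − Rⁿ) − (1/(n−2))(R₂^{n−2} − R^{n−2}) ≥ (R^{n−2}/(16 n²))·β². -/
open intervalIntegral

lemma key_ineq (n : ℕ) (hn : 3 ≤ n) (t : ℝ) (ht : 1 ≤ t) (ht2 : t ^ n ≤ 2) :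
    (t ^ n - 1) / n - (t ^ (n - 2) - 1) / ((n : ℝ) - 2) ≥ (t ^ n - 1) ^ 2 / (4 * n ^ 2) := by
  have hc : (3:ℝ) ≤ n := by exact_mod_cast hn
  have ht0 : (0:ℝ) < t := lt_of_lt_of_le one_pos ht
  -- integral computation
  have e1 : ∫ u in (1:ℝ)..t, u ^ (n-1) = (t ^ n - 1) / n := by
    rw [integral_pow, show n - 1 + 1 = n from by omega, one_pow,
      Nat.cast_sub (by omega : 1 ≤ n)]
    push_cast; ring_nf
  have e2 : ∫ u in (1:ℝ)..t, u ^ (n-3) = (t ^ (n-2) - 1) / ((n:ℝ) - 2) := by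
    rw [integral_pow, show n - 3 + 1 = n - 2 from by omega, one_pow,
      Nat.cast_sub (by omega : 3 ≤ n)]
    push_cast; ring_nf
  have e3 : ∫ u in (1:ℝ)..t, (u ^ (n-1) - u ^ (n-3))
      = (t ^ n - 1) / n - (t ^ (n-2) - 1) / ((n:ℝ) - 2) := by
    rw [integral_sub ((continuous_pow _).intervalIntegrable _ _)
      ((continuous_pow _).intervalIntegrable _ _), e1, e2]
  have e4 : ∫ u in (1:ℝ)..t, (u ^ 2 - 1) = (t ^ 3 - 1) / 3 - (t - 1) := by
    rw [integral_sub ((continuous_pow _).intervalIntegrable _ _)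
      intervalIntegrable_const, integral_pow,
      integral_const]
    norm_num
  have mono : (∫ u in (1:ℝ)..t, (u ^ 2 - 1)) ≤ ∫ u in (1:ℝ)..t, (u ^ (n-1) - u ^ (n-3)) := by
    apply integral_mono_on ht
    · exact ((continuous_pow 2).sub continuous_const).intervalIntegrable _ _
    · exact ((continuous_pow _).sub (continuous_pow _)).intervalIntegrable _ _
    · intro x hx
      have hx1 : 1 ≤ x := hx.1
      have hp : x ^ (n-1) = x ^ (n-3) * x ^ 2 := by rw [← pow_add]; congr 1; omega
      have h3 : (1:ℝ) ≤ x ^ (n-3) := one_le_pow₀ hx1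
      have hsq : (0:ℝ) ≤ x ^ 2 - 1 := by nlinarith
      nlinarith [mul_le_mul_of_nonneg_right h3 hsq]
  have hA : (t ^ n - 1) / n - (t ^ (n-2) - 1) / ((n:ℝ) - 2) ≥ (t - 1) ^ 2 := by
    rw [← e3]
    have : (t - 1) ^ 2 ≤ (t ^ 3 - 1) / 3 - (t - 1) := by nlinarith [sq_nonneg (t-1), ht]
    calc (t - 1) ^ 2 ≤ (t ^ 3 - 1) / 3 - (t - 1) := this
      _ = ∫ u in (1:ℝ)..t, (u ^ 2 - 1) := e4.symm
      _ ≤ _ := mono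
  -- bound t^n - 1 ≤ 2 n (t-1)
  have hsum : (∑ i ∈ Finset.range n, t ^ i) ≤ 2 * n := by
    calc (∑ i ∈ Finset.range n, t ^ i) ≤ ∑ _i ∈ Finset.range n, (2:ℝ) := by
          apply Finset.sum_le_sum
          intro i hi
          calc t ^ i ≤ t ^ n := pow_le_pow_right₀ ht (le_of_lt (Finset.mem_range.mp hi))
            _ ≤ 2 := ht2
      _ = 2 * n := by simp [mul_comm]
  have h1 : t ^ n - 1 ≤ 2 * n * (t - 1) := by
    have := geom_sum_mul t n
    have ht1 : (0:ℝ) ≤ t - 1 := by linarith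
    nlinarith [mul_le_mul_of_nonneg_right hsum ht1]
  have h0 : (0:ℝ) ≤ t ^ n - 1 := by
    have := one_le_pow₀ (n := n) ht
    linarith
  have h2 : (t ^ n - 1) ^ 2 ≤ 4 * (n:ℝ) ^ 2 * (t - 1) ^ 2 := by nlinarith [h1, h0]
  have hden : (0:ℝ) < 4 * (n:ℝ) ^ 2 := by positivity
  have h4 : (t ^ n - 1) ^ 2 / (4 * (n:ℝ) ^ 2) ≤ (t - 1) ^ 2 := by
    rw [div_le_iff₀ hden]; linarith
  linarith

theorem stmt_2 (n : ℕ) (hn : 3 ≤ n) (R β : ℝ) (hR : 0 < R) (hβ0 : 0 ≤ β) (hβ2 : β ≤ 2)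
    (R₂ : ℝ) (hR₂ : R₂ = R * (1 + β / 2) ^ ((1 : ℝ) / n)) :
    (∫ r in R..R₂, (1 / R ^ 2 - 1 / r ^ 2) * r ^ (n - 1)) ≥
        1 / (n * R ^ 2) * (R₂ ^ n - R ^ n) - 1 / ((n : ℝ) - 2) * (R₂ ^ (n - 2) - R ^ (n - 2))
      ∧ 1 / (n * R ^ 2) * (R₂ ^ n - R ^ n) - 1 / ((n : ℝ) - 2) * (R₂ ^ (n - 2) - R ^ (n - 2)) ≥
        R ^ (n - 2) / (16 * n ^ 2) * β ^ 2 := by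
  have hb : (0:ℝ) < 1 + β / 2 := by linarith
  have hn0 : (n:ℝ) ≠ 0 := by positivity
  set t : ℝ := (1 + β / 2) ^ ((1 : ℝ) / n) with ht_def
  have ht0 : 0 < t := Real.rpow_pos_of_pos hb _
  have htn : t ^ n = 1 + β / 2 := by
    rw [ht_def, ← Real.rpow_natCast ((1 + β / 2) ^ ((1:ℝ)/n)) n, ← Real.rpow_mul hb.le,
      one_div, inv_mul_cancel₀ hn0, Real.rpow_one]
  have ht1 : 1 ≤ t := by
    by_contra h
    push_neg at h
    have : t ^ n < 1 := pow_lt_one₀ ht0.le h (by omega)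
    rw [htn] at this; linarith
  have ht2 : t ^ n ≤ 2 := by rw [htn]; linarith
  have hRle : R ≤ R₂ := by
    rw [hR₂]; nlinarith
  have hRne : R ≠ 0 := hR.ne'
  have hn2 : (n:ℝ) - 2 ≠ 0 := by
    have : (3:ℝ) ≤ n := by exact_mod_cast hn
    linarith
  constructor
  · -- exact computation of the integral
    have h1 : (∫ r in R..R₂, (1 / R ^ 2 - 1 / r ^ 2) * r ^ (n - 1))
        = ∫ r in R..R₂, ((1 / R ^ 2) * r ^ (n-1) - r ^ (n - 3)) := by
      apply integral_congr
      intro r hr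
      rw [Set.uIcc_of_le hRle] at hr
      have hrpos : 0 < r := lt_of_lt_of_le hR hr.1
      have hp : r ^ (n-1) = r ^ (n-3) * r ^ 2 := by rw [← pow_add]; congr 1; omega
      show (1 / R ^ 2 - 1 / r ^ 2) * r ^ (n - 1) = (1 / R ^ 2) * r ^ (n-1) - r ^ (n - 3)
      calc (1 / R ^ 2 - 1 / r ^ 2) * r ^ (n - 1)
          = (1 / R ^ 2) * r ^ (n-1) - (1 / r ^ 2) * (r ^ (n-3) * r ^ 2) := by rw [← hp]; ring
        _ = (1 / R ^ 2) * r ^ (n-1) - r ^ (n - 3) := by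
            field_simp
    rw [h1, integral_sub (f := fun r : ℝ => (1 / R ^ 2) * r ^ (n-1))
      ((continuous_const.mul (continuous_pow _)).intervalIntegrable _ _)
      ((continuous_pow _).intervalIntegrable _ _),
      intervalIntegral.integral_const_mul, integral_pow,
      integral_pow, show n - 1 + 1 = n from by omega,
      show n - 3 + 1 = n - 2 from by omega,
      Nat.cast_sub (by omega : 1 ≤ n), Nat.cast_sub (by omega : 3 ≤ n)]
    push_cast
    have : (n:ℝ) - 1 + 1 = n := by ring
    rw [this]
    apply ge_of_eq
    ring
  · have hkey := key_ineq n hn t ht1 ht2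
    rw [htn] at hkey
    have e5 : R₂ ^ n - R ^ n = R ^ n * (β/2) := by rw [hR₂, mul_pow, htn]; ring
    have e6 : R₂ ^ (n-2) - R ^ (n-2) = R ^ (n-2) * (t ^ (n-2) - 1) := by
      rw [hR₂, mul_pow]; ring
    have e7 : R ^ n = R ^ (n-2) * R ^ 2 := by rw [← pow_add]; congr 1; omega
    have hP : (0:ℝ) ≤ R ^ (n-2) := by positivity
    rw [e5, e6, e7, ge_iff_le]
    calc R ^ (n-2) / (16 * (n:ℝ) ^ 2) * β ^ 2
        = R ^ (n-2) * ((1 + β/2 - 1) ^ 2 / (4 * (n:ℝ) ^ 2)) := by ring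
      _ ≤ R ^ (n-2) * ((1 + β/2 - 1) / n - (t ^ (n-2) - 1) / ((n:ℝ) - 2)) :=
          mul_le_mul_of_nonneg_left hkey.le hP
      _ = 1 / (↑n * R ^ 2) * (R ^ (n-2) * R ^ 2 * (β/2))
            - 1 / ((n:ℝ) - 2) * (R ^ (n-2) * (t ^ (n-2) - 1)) := by
          field_simp
          ring
end

section
/- Let n ≥ 2 be an integer, R > 0, α ∈ (−1/R, 0), c > 0, and define h as h(r) = c²(−α² + (n−1)(1+αr)/r²)e^{−2α(r−R)} for r ≥ R. Then for every r ≥ R, h(R) − h(r) ≥ (7(n−1)/16)·c²·(1/R² − 1/r²). -/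
set_option maxHeartbeats 1000000
theorem stmt_5 (n : ℕ) (hn : 2 ≤ n) (R α c : ℝ) (hR : 0 < R)
    (hα1 : -(1 / R) < α) (hα0 : α < 0) (hc : 0 < c)
    (h : ℝ → ℝ)
    (hh : ∀ r, h r = c ^ 2 * (-α ^ 2 + ((n : ℝ) - 1) * (1 + α * r) / r ^ 2) *
      Real.exp (-2 * α * (r - R))) :
    ∀ r, R ≤ r → h R - h r ≥ 7 * ((n : ℝ) - 1) / 16 * c ^ 2 * (1 / R ^ 2 - 1 / r ^ 2) := by
  intro r hr
  have hd : (1:ℝ) ≤ (n:ℝ) - 1 := by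
    have : (2:ℝ) ≤ (n:ℝ) := by exact_mod_cast hn
    linarith
  set d : ℝ := (n:ℝ) - 1 with hd_def
  clear_value d
  set K : ℝ := 7 * d / 16 * c ^ 2 with hK_def
  clear_value K
  set F : ℝ → ℝ := fun x => c ^ 2 * (-α ^ 2 + d * (1 + α * x) / x ^ 2) *
      Real.exp (-2 * α * (x - R)) - K / x ^ 2 with hF_def
  -- derivative of F at any x ≠ 0
  have hasD : ∀ x : ℝ, x ≠ 0 → HasDerivAt F
      ((c ^ 2 * ((d * α * x ^ 2 - d * (1 + α * x) * ((2:ℕ) * x ^ 1)) / (x ^ 2) ^ 2)) *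
         Real.exp (-2 * α * (x - R)) +
       (c ^ 2 * (-α ^ 2 + d * (1 + α * x) / x ^ 2)) *
         (Real.exp (-2 * α * (x - R)) * (-2 * α)) -
       (0 * x ^ 2 - K * ((2:ℕ) * x ^ 1)) / (x ^ 2) ^ 2) x := by
    intro x hx
    have hx2 : x ^ 2 ≠ 0 := pow_ne_zero 2 hx
    have hnum : HasDerivAt (fun y : ℝ => d * (1 + α * y)) (d * α) x := by
      have : HasDerivAt (fun y : ℝ => 1 + α * y) α x := by
        simpa using ((hasDerivAt_id x).const_mul α).const_add 1
      simpa using this.const_mul d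
    have hden : HasDerivAt (fun y : ℝ => y ^ 2) ((2:ℕ) * x ^ 1) x := hasDerivAt_pow 2 x
    have hg : HasDerivAt (fun y : ℝ => -α ^ 2 + d * (1 + α * y) / y ^ 2)
        ((d * α * x ^ 2 - d * (1 + α * x) * ((2:ℕ) * x ^ 1)) / (x ^ 2) ^ 2) x := by
      simpa using (hnum.div hden hx2).const_add (-α ^ 2)
    have hexp : HasDerivAt (fun y : ℝ => Real.exp (-2 * α * (y - R)))
        (Real.exp (-2 * α * (x - R)) * (-2 * α)) x := by
      have : HasDerivAt (fun y : ℝ => -2 * α * (y - R)) (-2 * α) x := by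
        simpa using ((hasDerivAt_id x).sub_const R).const_mul (-2 * α)
      simpa [mul_comm] using this.exp
    have hKx : HasDerivAt (fun y : ℝ => K / y ^ 2)
        ((0 * x ^ 2 - K * ((2:ℕ) * x ^ 1)) / (x ^ 2) ^ 2) x :=
      (hasDerivAt_const x K).div hden hx2
    exact ((hg.const_mul (c ^ 2)).mul hexp).sub hKx
  -- F is antitone on [R, ∞)
  have hanti : AntitoneOn F (Set.Ici R) := by
    apply antitoneOn_of_deriv_nonpos (convex_Ici R)
    · intro x hx
      have hx0 : x ≠ 0 := ne_of_gt (lt_of_lt_of_le hR hx)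
      exact ((hasD x hx0).continuousAt).continuousWithinAt
    · intro x hx
      rw [interior_Ici] at hx
      have hx0 : (0:ℝ) < x := lt_trans hR hx
      exact ((hasD x hx0.ne').differentiableAt).differentiableWithinAt
    · intro x hx
      rw [interior_Ici] at hx
      have hx0 : (0:ℝ) < x := lt_trans hR hx
      have hD := (hasD x hx0.ne').deriv
      rw [hD]
      set E : ℝ := Real.exp (-2 * α * (x - R)) with hE_def
      have hE1 : 1 ≤ E := by
        rw [hE_def]
        apply Real.one_le_exp
        have hxR : R < x := hx
        have h1 : 0 ≤ (-α) * (x - R) := mul_nonneg (by linarith) (by linarith)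
        nlinarith [h1]
      have hEpos : 0 < E := lt_of_lt_of_le one_pos hE1
      have hx3 : (0:ℝ) < x ^ 3 := by positivity
      -- rewrite the derivative as a single clean expression
      have key : (c ^ 2 * ((d * α * x ^ 2 - d * (1 + α * x) * ((2:ℕ) * x ^ 1)) / (x ^ 2) ^ 2)) * E +
          (c ^ 2 * (-α ^ 2 + d * (1 + α * x) / x ^ 2)) * (E * (-2 * α)) -
          (0 * x ^ 2 - K * ((2:ℕ) * x ^ 1)) / (x ^ 2) ^ 2
          = (c ^ 2 * (-(d * (2 + 3 * (α * x) + 2 * (α * x) ^ 2)) + 2 * (α * x) ^ 3)) * E / x ^ 3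
            + 2 * K / x ^ 3 := by
        field_simp
        ring
      rw [key]
      have hBnum : c ^ 2 * (-(d * (2 + 3 * (α * x) + 2 * (α * x) ^ 2)) + 2 * (α * x) ^ 3)
          ≤ -(7 / 8 * d * c ^ 2) := by
        have hy : α * x < 0 := mul_neg_of_neg_of_pos hα0 hx0
        nlinarith [mul_nonneg (mul_nonneg (sq_nonneg c) (by linarith : (0:ℝ) ≤ d)) (sq_nonneg (α * x + 3/4)),
          mul_pos (pow_pos hc 2) (mul_pos (neg_pos.mpr hy) (mul_pos (neg_pos.mpr hy) (neg_pos.mpr hy)))]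
      have h1 : (c ^ 2 * (-(d * (2 + 3 * (α * x) + 2 * (α * x) ^ 2)) + 2 * (α * x) ^ 3)) * E
          ≤ -(7 / 8 * d * c ^ 2) := by
        calc (c ^ 2 * (-(d * (2 + 3 * (α * x) + 2 * (α * x) ^ 2)) + 2 * (α * x) ^ 3)) * E
            ≤ (c ^ 2 * (-(d * (2 + 3 * (α * x) + 2 * (α * x) ^ 2)) + 2 * (α * x) ^ 3)) * 1 := by
              apply mul_le_mul_of_nonpos_left hE1
              have hdc : 0 < 7 / 8 * d * c ^ 2 := by
                have : 0 < d * c ^ 2 := mul_pos (by linarith) (pow_pos hc 2)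
                linarith
              linarith [hBnum, hdc]
          _ ≤ -(7 / 8 * d * c ^ 2) := by simpa using hBnum
      have h2 : (c ^ 2 * (-(d * (2 + 3 * (α * x) + 2 * (α * x) ^ 2)) + 2 * (α * x) ^ 3)) * E / x ^ 3
          ≤ -(7 / 8 * d * c ^ 2) / x ^ 3 := by
        apply div_le_div_of_nonneg_right h1 (le_of_lt hx3)

      have h3 : 2 * K / x ^ 3 = 7 / 8 * d * c ^ 2 / x ^ 3 := by
        rw [hK_def]; ring
      rw [h3]
      have h4 : -(7 / 8 * d * c ^ 2) / x ^ 3 = -(7 / 8 * d * c ^ 2 / x ^ 3) := by ring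
      linarith [h2]
  -- conclude
  have hFr : F r ≤ F R := hanti (Set.mem_Ici.mpr le_rfl) (Set.mem_Ici.mpr hr) hr
  have hFR : F R = h R - K / R ^ 2 := by rw [hF_def, hh R]
  have hFr2 : F r = h r - K / r ^ 2 := by rw [hF_def, hh r]
  rw [hFR, hFr2] at hFr
  have : h R - h r ≥ K / R ^ 2 - K / r ^ 2 := by linarith
  have hKeq : K * (1 / R ^ 2 - 1 / r ^ 2) = K / R ^ 2 - K / r ^ 2 := by ring
  rw [ge_iff_le, hKeq]
  linarith
end

section
/- Let n ≥ 2, R > 0, α ∈ (−1/R, 0), c > 0, β ∈ [0,2], R₂ = R(1+β/2)^(1/n), and h(r) = c²(−α² + (n−1)(1+αr)/r²)e^{−2α(r−R)} for r ≥ R. Then ∫_R^{R₂} (h(R) − h(r)) r^{n−1} dr ≥ (7(n−1)R^{n−2}/(16²n²))·c²·β². -/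
set_option maxHeartbeats 1000000

lemma key_scaled (m x s : ℝ) (hm : 1 ≤ m) (hx0 : 0 ≤ x) (hx1 : x ≤ 1)
    (hs1 : 1 ≤ s) (hs2 : s ^ 2 ≤ 2) :
    7 * m / 16 * (1 - 1 / s ^ 2) ≤
      (-x ^ 2 + m * (1 - x)) - (-x ^ 2 + m * (1 - x * s) / s ^ 2) * Real.exp (2 * x * (s - 1)) := by
  have hs0 : 0 < s := by linarith
  have hs2pos : (0:ℝ) < s ^ 2 := by positivity
  set E := Real.exp (2 * x * (s - 1)) with hE
  have hEpos : 0 < E := Real.exp_pos _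
  have hE1 : 1 + 2 * x * (s - 1) ≤ E := by
    have := Real.add_one_le_exp (2 * x * (s - 1)); linarith
  have H : 7 * m / 16 * (s ^ 2 - 1) ≤
      (-x ^ 2 + m * (1 - x)) * s ^ 2 - (-x ^ 2 * s ^ 2 + m * (1 - x * s)) * E := by
    rcases le_or_gt (m * (1 - x * s)) (x ^ 2 * s ^ 2) with hQ | hQ
    · -- Q ≤ 0
      have hQ' : -x ^ 2 * s ^ 2 + m * (1 - x * s) ≤ 0 := by linarith
      have hmul : (-x ^ 2 * s ^ 2 + m * (1 - x * s)) * E ≤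
          (-x ^ 2 * s ^ 2 + m * (1 - x * s)) * (1 + 2 * x * (s - 1)) :=
        mul_le_mul_of_nonpos_left hE1 hQ'
      have hq : 0 ≤ 2 * s * x ^ 2 - (s + 2) * x + 9 / 16 * (s + 1) := by
        nlinarith [sq_nonneg (4 * s * x - s - 2), mul_nonneg (by linarith : (0:ℝ) ≤ 7 * s + 8) (by linarith : (0:ℝ) ≤ s - 1), hs0]
      nlinarith [mul_nonneg (by linarith : (0:ℝ) ≤ s - 1) hq,
        mul_nonneg (mul_nonneg (by linarith : (0:ℝ) ≤ s - 1) hq) (by linarith : (0:ℝ) ≤ m - 1),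
        mul_nonneg (mul_nonneg (pow_nonneg hx0 3) (sq_nonneg s)) (by linarith : (0:ℝ) ≤ s - 1)]
    · -- Q > 0
      have hQ0 : 0 < -x ^ 2 * s ^ 2 + m * (1 - x * s) := by linarith
      have hxs : x * s < 1 := by nlinarith [sq_nonneg (x*s)]
      have ht : 2 * x * (s - 1) < 1 := by
        nlinarith [mul_nonneg hx0 (by linarith : (0:ℝ) ≤ s - 1)]
      have h1t : 0 < 1 - 2 * x * (s - 1) := by linarith
      have hE2 : E * (1 - 2 * x * (s - 1)) ≤ 1 := by
        have h2 := Real.add_one_le_exp (-(2 * x * (s - 1)))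
        have h3 : E * (1 - 2 * x * (s - 1)) ≤ E * Real.exp (-(2 * x * (s - 1))) := by
          apply mul_le_mul_of_nonneg_left _ hEpos.le
          linarith
        have h4 : E * Real.exp (-(2 * x * (s - 1))) = 1 := by
          rw [hE, ← Real.exp_add]; ring_nf; exact Real.exp_zero
        linarith
      have hs32 : s ≤ 3 / 2 := by nlinarith
      have hq2 : 0 ≤ 2 * s ^ 2 * x ^ 2 - (9/8 * s ^ 2 + s + 7/8) * x + 9 / 16 * (s + 1) := by
        have hcube : 81 * s ^ 3 ≤ 49 + 161 * s + 63 * s ^ 2 := by nlinarith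
        nlinarith [sq_nonneg (4 * s ^ 2 * x - (9/8 * s ^ 2 + s + 7/8)),
          mul_nonneg (by linarith : (0:ℝ) ≤ s - 1) (by linarith : (0:ℝ) ≤ 49 + 161 * s + 63 * s ^ 2 - 81 * s ^ 3),
          hs2pos, sq_nonneg s]
      -- Q*E ≤ Q/(1-t), and Q/(1-t) ≤ P' - c₀ i.e. Q ≤ (P'-c₀)(1-t)
      have hpoly : -x ^ 2 * s ^ 2 + m * (1 - x * s) ≤
          ((-x ^ 2 + m * (1 - x)) * s ^ 2 - 7 * m / 16 * (s ^ 2 - 1)) * (1 - 2 * x * (s - 1)) := by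
        nlinarith [mul_nonneg (by linarith : (0:ℝ) ≤ s - 1) hq2,
          mul_nonneg (mul_nonneg (by linarith : (0:ℝ) ≤ s - 1) hq2) (by linarith : (0:ℝ) ≤ m - 1),
          mul_nonneg (mul_nonneg (pow_nonneg hx0 3) (sq_nonneg s)) (by linarith : (0:ℝ) ≤ s - 1)]
      have hQE : (-x ^ 2 * s ^ 2 + m * (1 - x * s)) * E ≤
          (-x ^ 2 + m * (1 - x)) * s ^ 2 - 7 * m / 16 * (s ^ 2 - 1) := by
        have h5 : (-x ^ 2 * s ^ 2 + m * (1 - x * s)) * (E * (1 - 2 * x * (s - 1))) ≤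
            (-x ^ 2 * s ^ 2 + m * (1 - x * s)) * 1 :=
          mul_le_mul_of_nonneg_left hE2 hQ0.le
        have h6 : ((-x ^ 2 * s ^ 2 + m * (1 - x * s)) * E) * (1 - 2 * x * (s - 1)) ≤
            ((-x ^ 2 + m * (1 - x)) * s ^ 2 - 7 * m / 16 * (s ^ 2 - 1)) * (1 - 2 * x * (s - 1)) := by
          calc ((-x ^ 2 * s ^ 2 + m * (1 - x * s)) * E) * (1 - 2 * x * (s - 1))
              = (-x ^ 2 * s ^ 2 + m * (1 - x * s)) * (E * (1 - 2 * x * (s - 1))) := by ring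
            _ ≤ (-x ^ 2 * s ^ 2 + m * (1 - x * s)) * 1 := h5
            _ = -x ^ 2 * s ^ 2 + m * (1 - x * s) := mul_one _
            _ ≤ _ := hpoly
        exact le_of_mul_le_mul_right h6 h1t
      linarith
  have e1 : (-x ^ 2 + m * (1 - x)) - (-x ^ 2 + m * (1 - x * s) / s ^ 2) * E =
      ((-x ^ 2 + m * (1 - x)) * s ^ 2 - (-x ^ 2 * s ^ 2 + m * (1 - x * s)) * E) / s ^ 2 := by
    field_simp
  have e2 : 7 * m / 16 * (1 - 1 / s ^ 2) = (7 * m / 16 * (s ^ 2 - 1)) / s ^ 2 := by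
    field_simp
  rw [e1, e2]
  gcongr

lemma pow_sub_one_le_aux (σ : ℝ) (hσ : 1 ≤ σ) : ∀ k : ℕ, σ ^ (k + 1) - 1 ≤ (k + 1 : ℝ) * σ ^ k * (σ - 1) := by
  intro k
  induction k with
  | zero => simp
  | succ k ih =>
    have h1 : (1:ℝ) ≤ σ ^ (k+1) := one_le_pow₀ hσ
    have h0 : (0:ℝ) ≤ σ ^ k := by positivity
    calc σ ^ (k + 2) - 1 = σ * (σ ^ (k+1) - 1) + (σ - 1) := by ring
      _ ≤ σ * ((k + 1 : ℝ) * σ ^ k * (σ - 1)) + σ ^ (k+1) * (σ - 1) := by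
          have := mul_le_mul_of_nonneg_left ih (by linarith : (0:ℝ) ≤ σ)
          nlinarith [mul_le_mul_of_nonneg_right h1 (by linarith : (0:ℝ) ≤ σ - 1)]
      _ = (k + 2 : ℝ) * σ ^ (k+1) * (σ - 1) := by ring
      _ = ((k+1 : ℕ) + 1 : ℝ) * σ ^ (k+1) * (σ - 1) := by push_cast; ring

theorem stmt_6 (n : ℕ) (hn : 2 ≤ n) (R α c β : ℝ) (hR : 0 < R)
    (hα1 : -(1 / R) < α) (hα0 : α < 0) (hc : 0 < c) (hβ0 : 0 ≤ β) (hβ2 : β ≤ 2)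
    (R₂ : ℝ) (hR₂ : R₂ = R * (1 + β / 2) ^ ((1 : ℝ) / n))
    (h : ℝ → ℝ)
    (hh : ∀ r, h r = c ^ 2 * (-α ^ 2 + ((n : ℝ) - 1) * (1 + α * r) / r ^ 2) *
      Real.exp (-2 * α * (r - R))) :
    (∫ r in R..R₂, (h R - h r) * r ^ (n - 1)) ≥
      7 * ((n : ℝ) - 1) * R ^ (n - 2) / (16 ^ 2 * n ^ 2) * c ^ 2 * β ^ 2 := by
  obtain ⟨k, rfl⟩ : ∃ k, n = k + 2 := ⟨n - 2, by omega⟩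
  simp only [show k + 2 - 1 = k + 1 from rfl, show k + 2 - 2 = k from rfl]
  set m : ℝ := ((k + 2 : ℕ) : ℝ) - 1 with hmdef
  have hm1 : (1 : ℝ) ≤ m := by
    rw [hmdef]; push_cast; linarith [Nat.cast_nonneg (α := ℝ) k]
  set σ : ℝ := (1 + β / 2) ^ ((1 : ℝ) / ((k + 2 : ℕ) : ℝ)) with hσdef
  have h1u : (1 : ℝ) ≤ 1 + β / 2 := by linarith
  have hu2 : (1 : ℝ) + β / 2 ≤ 2 := by linarith
  have hσpos : 0 < σ := Real.rpow_pos_of_pos (by linarith) _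
  have hσn : σ ^ (k + 2) = 1 + β / 2 := by
    rw [hσdef, ← Real.rpow_natCast ((1 + β / 2) ^ ((1 : ℝ) / ((k + 2 : ℕ) : ℝ))) (k + 2),
      ← Real.rpow_mul (by linarith), one_div, inv_mul_cancel₀ (by positivity), Real.rpow_one]
  have hσ1 : 1 ≤ σ := by
    by_contra hlt
    push_neg at hlt
    have : σ ^ (k + 2) < 1 := pow_lt_one₀ hσpos.le hlt (by omega)
    rw [hσn] at this; linarith
  have hσ2 : σ ^ 2 ≤ 2 := by
    calc σ ^ 2 ≤ σ ^ (k + 2) := pow_le_pow_right₀ hσ1 (by omega)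
      _ = 1 + β / 2 := hσn
      _ ≤ 2 := hu2
  have hR₂σ : R₂ = R * σ := hR₂
  have hRR₂ : R ≤ R₂ := by rw [hR₂σ]; nlinarith
  have hR₂pos : 0 < R₂ := lt_of_lt_of_le hR hRR₂
  -- pointwise bound
  have hpt : ∀ r ∈ Set.Icc R R₂,
      7 * m / 16 * c ^ 2 * R ^ (k + 1) * (1 / R ^ 2 - 1 / r ^ 2) ≤ (h R - h r) * r ^ (k + 1) := by
    intro r hr
    obtain ⟨hrR, hrR₂⟩ := hr
    have hr0 : 0 < r := lt_of_lt_of_le hR hrR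
    have hxle : -α * R ≤ 1 := by
      have : -α < 1 / R := by linarith
      rw [lt_div_iff₀ hR] at this; linarith
    have hsle : (r / R) ^ 2 ≤ 2 := by
      have hrσ : r ≤ R * σ := by rw [← hR₂σ]; exact hrR₂
      rw [div_pow, div_le_iff₀ (by positivity)]
      nlinarith
    have hkey := key_scaled m (-α * R) (r / R) hm1 (by nlinarith) hxle
      (by rw [le_div_iff₀ hR]; linarith) hsle
    have hcR : (0 : ℝ) ≤ c ^ 2 / R ^ 2 := by positivity
    have hmid := mul_le_mul_of_nonneg_left hkey hcR
    have eA : c ^ 2 / R ^ 2 * (7 * m / 16 * (1 - 1 / (r / R) ^ 2)) =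
        7 * m / 16 * c ^ 2 * (1 / R ^ 2 - 1 / r ^ 2) := by
      field_simp
    have harg : 2 * (-α * R) * (r / R - 1) = -2 * α * (r - R) := by
      field_simp
    have eB : c ^ 2 / R ^ 2 * ((-(-α * R) ^ 2 + m * (1 - -α * R)) -
        (-(-α * R) ^ 2 + m * (1 - -α * R * (r / R)) / (r / R) ^ 2) *
          Real.exp (2 * (-α * R) * (r / R - 1))) = h R - h r := by
      rw [harg, hh r, hh R, show (-2) * α * (R - R) = 0 by ring, Real.exp_zero, mul_one]
      field_simp
      ring
    rw [eA, eB] at hmid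
    have hr2 : R ^ 2 ≤ r ^ 2 := by nlinarith
    have h1r2 : 1 / r ^ 2 ≤ 1 / R ^ 2 := one_div_le_one_div_of_le (by positivity) hr2
    have hnn : 0 ≤ 7 * m / 16 * c ^ 2 * (1 / R ^ 2 - 1 / r ^ 2) := by
      apply mul_nonneg (by positivity); linarith
    have hpw : R ^ (k + 1) ≤ r ^ (k + 1) := pow_le_pow_left₀ hR.le hrR _
    calc 7 * m / 16 * c ^ 2 * R ^ (k + 1) * (1 / R ^ 2 - 1 / r ^ 2)
        = (7 * m / 16 * c ^ 2 * (1 / R ^ 2 - 1 / r ^ 2)) * R ^ (k + 1) := by ring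
      _ ≤ (h R - h r) * r ^ (k + 1) :=
          mul_le_mul hmid hpw (by positivity) (le_trans hnn hmid)
  -- integrability
  have h0notin : (0 : ℝ) ∉ Set.uIcc R R₂ := by
    rw [Set.uIcc_of_le hRR₂]
    rintro ⟨h1, h2⟩; linarith
  have hne : ∀ r ∈ Set.uIcc R R₂, r ≠ 0 := by
    intro r hr
    rw [Set.uIcc_of_le hRR₂] at hr
    exact ne_of_gt (lt_of_lt_of_le hR hr.1)
  have hcontf : ContinuousOn (fun r => (h R - h r) * r ^ (k + 1)) (Set.uIcc R R₂) := by
    simp only [hh]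
    apply ContinuousOn.mul
    · apply ContinuousOn.sub continuousOn_const
      apply ContinuousOn.mul
      · apply ContinuousOn.mul continuousOn_const
        apply ContinuousOn.add continuousOn_const
        apply ContinuousOn.div (by fun_prop) (by fun_prop)
        intro r hr
        exact pow_ne_zero _ (hne r hr)
      · fun_prop
    · fun_prop
  have hcontg : ContinuousOn
      (fun r : ℝ => 7 * m / 16 * c ^ 2 * R ^ (k + 1) * (1 / R ^ 2 - 1 / r ^ 2))
      (Set.uIcc R R₂) := by
    apply ContinuousOn.mul continuousOn_const
    apply ContinuousOn.sub continuousOn_const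
    apply ContinuousOn.div continuousOn_const (by fun_prop)
    intro r hr
    exact pow_ne_zero _ (hne r hr)
  have hintf : IntervalIntegrable (fun r => (h R - h r) * r ^ (k + 1))
      MeasureTheory.volume R R₂ := hcontf.intervalIntegrable
  have hintg : IntervalIntegrable
      (fun r : ℝ => 7 * m / 16 * c ^ 2 * R ^ (k + 1) * (1 / R ^ 2 - 1 / r ^ 2))
      MeasureTheory.volume R R₂ := hcontg.intervalIntegrable
  have hmono := intervalIntegral.integral_mono_on hRR₂ hintg hintf hpt
  -- compute the lower integral
  have hzrw : ∀ r : ℝ, (1 : ℝ) / R ^ 2 - 1 / r ^ 2 = 1 / R ^ 2 - r ^ (-2 : ℤ) := by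
    intro r
    simp [zpow_neg]
  have hIval : (∫ r in R..R₂, 7 * m / 16 * c ^ 2 * R ^ (k + 1) * (1 / R ^ 2 - 1 / r ^ 2)) =
      7 * m / 16 * c ^ 2 * R ^ (k + 1) * ((R₂ - R) / R ^ 2 + (1 / R₂ - 1 / R)) := by
    simp only [hzrw]
    rw [intervalIntegral.integral_const_mul]
    congr 1
    rw [intervalIntegral.integral_sub intervalIntegrable_const
      (intervalIntegral.intervalIntegrable_zpow (Or.inr h0notin)),
      intervalIntegral.integral_const, integral_zpow (Or.inr ⟨by norm_num, h0notin⟩)]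
    have hRne : R ≠ 0 := ne_of_gt hR
    have hR₂ne : R₂ ≠ 0 := ne_of_gt hR₂pos
    norm_num
    field_simp
    ring
  rw [ge_iff_le]
  -- Bernoulli-type bound
  have hA := pow_sub_one_le_aux σ hσ1 (k + 1)
  have hσk2 : σ ^ (k + 1) * σ = 1 + β / 2 := by rw [← pow_succ]; exact hσn
  have hA' : β / 2 ≤ ((k + 2 : ℕ) : ℝ) * σ ^ (k + 1) * (σ - 1) := by
    have : σ ^ (k + 1 + 1) - 1 ≤ ((k + 1 : ℕ) + 1 : ℝ) * σ ^ (k + 1) * (σ - 1) := hA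
    rw [show k + 1 + 1 = k + 2 from rfl, hσn] at this
    push_cast at this ⊢
    linarith
  have hA2 : β / 2 * σ ≤ ((k + 2 : ℕ) : ℝ) * (1 + β / 2) * (σ - 1) := by
    have h2 := mul_le_mul_of_nonneg_right hA' hσpos.le
    calc β / 2 * σ ≤ ((k + 2 : ℕ) : ℝ) * σ ^ (k + 1) * (σ - 1) * σ := h2
      _ = ((k + 2 : ℕ) : ℝ) * (σ ^ (k + 1) * σ) * (σ - 1) := by ring
      _ = ((k + 2 : ℕ) : ℝ) * (1 + β / 2) * (σ - 1) := by rw [hσk2]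
  have key3 : β ^ 2 * σ ≤ 16 * ((k + 2 : ℕ) : ℝ) ^ 2 * (σ - 1) ^ 2 := by
    have h0 : (0 : ℝ) ≤ β / 2 * σ := by positivity
    have hsq := mul_self_le_mul_self h0 hA2
    have hN2 : (0 : ℝ) ≤ ((k + 2 : ℕ) : ℝ) ^ 2 := by positivity
    nlinarith [sq_nonneg (σ - 1),
      mul_nonneg (mul_nonneg hN2 (sq_nonneg (σ - 1))) (show (0:ℝ) ≤ 4 - (1 + β / 2) ^ 2 by nlinarith),
      mul_nonneg (mul_nonneg (sq_nonneg β) hσpos.le) (show (0:ℝ) ≤ σ - 1 by linarith)]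
  -- final chain
  have hval2 : (R₂ - R) / R ^ 2 + (1 / R₂ - 1 / R) = (σ - 1) ^ 2 / (R * σ) := by
    rw [hR₂σ]
    field_simp
    ring
  have hfinal : 7 * (((k + 2 : ℕ) : ℝ) - 1) * R ^ k / (16 ^ 2 * ((k + 2 : ℕ) : ℝ) ^ 2) * c ^ 2 * β ^ 2 ≤
      7 * m / 16 * c ^ 2 * R ^ (k + 1) * ((σ - 1) ^ 2 / (R * σ)) := by
    rw [← hmdef, show 7 * m / 16 * c ^ 2 * R ^ (k + 1) * ((σ - 1) ^ 2 / (R * σ)) =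
      (7 * m * c ^ 2 * (R ^ k * R) * (σ - 1) ^ 2) / (16 * (R * σ)) by ring,
      show 7 * m * R ^ k / (16 ^ 2 * ((k + 2 : ℕ) : ℝ) ^ 2) * c ^ 2 * β ^ 2 =
      (7 * m * R ^ k * c ^ 2 * β ^ 2) / (16 ^ 2 * ((k + 2 : ℕ) : ℝ) ^ 2) by ring,
      div_le_div_iff₀ (by positivity) (by positivity)]
    nlinarith [mul_le_mul_of_nonneg_left key3
      (show (0 : ℝ) ≤ 16 * (7 * m * c ^ 2 * (R ^ k * R)) by positivity)]
  calc 7 * (((k + 2 : ℕ) : ℝ) - 1) * R ^ k / (16 ^ 2 * ((k + 2 : ℕ) : ℝ) ^ 2) * c ^ 2 * β ^ 2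
      ≤ 7 * m / 16 * c ^ 2 * R ^ (k + 1) * ((σ - 1) ^ 2 / (R * σ)) := hfinal
    _ = 7 * m / 16 * c ^ 2 * R ^ (k + 1) * ((R₂ - R) / R ^ 2 + (1 / R₂ - 1 / R)) := by
        rw [hval2]
    _ = ∫ r in R..R₂, 7 * m / 16 * c ^ 2 * R ^ (k + 1) * (1 / R ^ 2 - 1 / r ^ 2) := hIval.symm
    _ ≤ ∫ r in R..R₂, (h R - h r) * r ^ (k + 1) := hmono
end

section
/- Let Ω, B, B₁, B₂ ⊂ ℝⁿ with B, B₁, B₂ concentric balls centered at the origin of radii R₁ ≤ R ≤ R₂, |Ω| = |B|, |Ω ∩ B| = |B₁|, and |Ω \ B| = |B₂ \ B|. If h : (0,∞) → ℝ is monotone decreasing and integrable on bounded sets, then ∫_Ω h(|x|) dx ≤ ∫_{B₁} h(|x|) dx + ∫_{B₂\B} h(|x|) dx, and consequently ∫_B h(|x|) dx − ∫_Ω h(|x|) dx ≥ ∫_{B₂\B} (h(R) − h(|x|)) dx. -/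
open MeasureTheory

lemma my_key_step {n : ℕ} (hn : 1 ≤ n) (h : ℝ → ℝ) (c : ℝ)
    (A A' : Set (EuclideanSpace ℝ (Fin n)))
    (hAm : MeasurableSet A) (hA'm : MeasurableSet A')
    (hAb : Bornology.IsBounded A) (hA'b : Bornology.IsBounded A')
    (hintA : IntegrableOn (fun x => h ‖x‖) A volume)
    (hintA' : IntegrableOn (fun x => h ‖x‖) A' volume)
    (hvol : volume A = volume A')
    (hle : ∀ x ∈ A \ A', h ‖x‖ ≤ c)
    (hge : ∀ᵐ x ∂(volume.restrict (A' \ A)), c ≤ h ‖x‖) :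
    (∫ x in A, h ‖x‖) ≤ ∫ x in A', h ‖x‖ := by
  have hfin : volume (A ∩ A') ≠ ⊤ :=
    ((measure_mono Set.inter_subset_left).trans_lt hAb.measure_lt_top).ne
  have hdfin : volume (A \ A') ≠ ⊤ :=
    ((measure_mono Set.diff_subset).trans_lt hAb.measure_lt_top).ne
  have hdiffeq : volume (A \ A') = volume (A' \ A) := by
    have h1 : volume (A ∩ A') + volume (A \ A') = volume A :=
      measure_inter_add_diff A hA'm
    have h2 : volume (A' ∩ A) + volume (A' \ A) = volume A' :=
      measure_inter_add_diff A' hAm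
    rw [Set.inter_comm] at h2
    rw [← h1, ← h2] at hvol
    exact (ENNReal.add_right_inj hfin).mp hvol
  have hsplitA : (∫ x in A ∩ A', h ‖x‖) + ∫ x in A \ A', h ‖x‖ = ∫ x in A, h ‖x‖ :=
    integral_inter_add_diff hA'm hintA
  have hsplitA' : (∫ x in A' ∩ A, h ‖x‖) + ∫ x in A' \ A, h ‖x‖ = ∫ x in A', h ‖x‖ :=
    integral_inter_add_diff hAm hintA'
  rw [Set.inter_comm] at hsplitA'
  have hb1 : (∫ x in A \ A', h ‖x‖) ≤ c * (volume (A \ A')).toReal := by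
    calc (∫ x in A \ A', h ‖x‖) ≤ ∫ _x in A \ A', c := by
          apply setIntegral_mono_on (hintA.mono_set Set.diff_subset)
            (integrableOn_const ((measure_mono Set.diff_subset).trans_lt hAb.measure_lt_top).ne)
            (hAm.diff hA'm) hle
      _ = c * (volume (A \ A')).toReal := by rw [setIntegral_const, smul_eq_mul, measureReal_def]; ring
  have hb2 : c * (volume (A' \ A)).toReal ≤ ∫ x in A' \ A, h ‖x‖ := by
    calc c * (volume (A' \ A)).toReal = ∫ _x in A' \ A, c := by
          rw [setIntegral_const, smul_eq_mul, measureReal_def]; ring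
      _ ≤ ∫ x in A' \ A, h ‖x‖ := setIntegral_mono_ae_restrict
          (integrableOn_const ((measure_mono Set.diff_subset).trans_lt hA'b.measure_lt_top).ne)
          (hintA'.mono_set Set.diff_subset) hge
  rw [hdiffeq] at hb1
  linarith
theorem stmt_9 (n : ℕ) (hn : 1 ≤ n) (Ω : Set (EuclideanSpace ℝ (Fin n)))
    (R R₁ R₂ : ℝ) (hR₁ : 0 < R₁) (h12 : R₁ ≤ R) (h2R : R ≤ R₂)
    (hΩm : MeasurableSet Ω) (hΩb : Bornology.IsBounded Ω)
    (B : Set (EuclideanSpace ℝ (Fin n))) (B₁ : Set (EuclideanSpace ℝ (Fin n)))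
    (B₂ : Set (EuclideanSpace ℝ (Fin n)))
    (hB : B = Metric.ball (0 : EuclideanSpace ℝ (Fin n)) R)
    (hB₁ : B₁ = Metric.ball (0 : EuclideanSpace ℝ (Fin n)) R₁)
    (hB₂ : B₂ = Metric.ball (0 : EuclideanSpace ℝ (Fin n)) R₂)
    (hvol : volume Ω = volume B)
    (hcap : volume (Ω ∩ B) = volume B₁)
    (hdiff : volume (Ω \ B) = volume (B₂ \ B))
    (h : ℝ → ℝ) (hmono : AntitoneOn h (Set.Ioi 0))
    (hint : ∀ s : Set (EuclideanSpace ℝ (Fin n)), Bornology.IsBounded s →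
      IntegrableOn (fun x => h ‖x‖) s) :
    (∫ x in Ω, h ‖x‖) ≤ (∫ x in B₁, h ‖x‖) + ∫ x in B₂ \ B, h ‖x‖
      ∧ (∫ x in B, h ‖x‖) - (∫ x in Ω, h ‖x‖) ≥ ∫ x in B₂ \ B, (h R - h ‖x‖) := by
  haveI : Nonempty (Fin n) := ⟨⟨0, hn⟩⟩
  have hR : 0 < R := lt_of_lt_of_le hR₁ h12
  have hR₂ : 0 < R₂ := lt_of_lt_of_le hR h2R
  have hBm : MeasurableSet B := hB ▸ measurableSet_ball
  have hB₁m : MeasurableSet B₁ := hB₁ ▸ measurableSet_ball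
  have hB₂m : MeasurableSet B₂ := hB₂ ▸ measurableSet_ball
  have hBb : Bornology.IsBounded B := hB ▸ Metric.isBounded_ball
  have hB₁b : Bornology.IsBounded B₁ := hB₁ ▸ Metric.isBounded_ball
  have hB₂b : Bornology.IsBounded B₂ := hB₂ ▸ Metric.isBounded_ball
  -- norm characterizations
  have hmemB : ∀ x : EuclideanSpace ℝ (Fin n), x ∈ B ↔ ‖x‖ < R := by
    intro x; rw [hB, Metric.mem_ball, dist_zero_right]
  have hmemB₁ : ∀ x : EuclideanSpace ℝ (Fin n), x ∈ B₁ ↔ ‖x‖ < R₁ := by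
    intro x; rw [hB₁, Metric.mem_ball, dist_zero_right]
  have hmemB₂ : ∀ x : EuclideanSpace ℝ (Fin n), x ∈ B₂ ↔ ‖x‖ < R₂ := by
    intro x; rw [hB₂, Metric.mem_ball, dist_zero_right]
  -- Claim 1
  have claim1 : (∫ x in Ω ∩ B, h ‖x‖) ≤ ∫ x in B₁, h ‖x‖ := by
    apply my_key_step hn h (h R₁) _ _ (hΩm.inter hBm) hB₁m
      (hΩb.subset Set.inter_subset_left) hB₁b
      (hint _ (hΩb.subset Set.inter_subset_left)) (hint _ hB₁b) hcap
    · intro x hx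
      have hx1 : R₁ ≤ ‖x‖ := le_of_not_gt (fun hc => hx.2 ((hmemB₁ x).mpr hc))
      exact hmono (Set.mem_Ioi.mpr hR₁) (Set.mem_Ioi.mpr (lt_of_lt_of_le hR₁ hx1)) hx1
    · have hz : ∀ᵐ x ∂(volume.restrict (B₁ \ (Ω ∩ B))), x ≠ 0 := by
        apply ae_restrict_of_ae
        rw [ae_iff]
        have : {x : EuclideanSpace ℝ (Fin n) | ¬ x ≠ 0} = {0} := by ext x; simp
        rw [this]
        exact measure_singleton 0
      filter_upwards [hz, ae_restrict_mem (hB₁m.diff (hΩm.inter hBm))] with x hx0 hxmem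
      have hnx : 0 < ‖x‖ := norm_pos_iff.mpr hx0
      have hlt : ‖x‖ < R₁ := (hmemB₁ x).mp hxmem.1
      exact hmono (Set.mem_Ioi.mpr hnx) (Set.mem_Ioi.mpr hR₁) (le_of_lt hlt)
  -- Claim 2
  have claim2 : (∫ x in Ω \ B, h ‖x‖) ≤ ∫ x in B₂ \ B, h ‖x‖ := by
    apply my_key_step hn h (h R₂) _ _ (hΩm.diff hBm) (hB₂m.diff hBm)
      (hΩb.subset Set.diff_subset) (hB₂b.subset Set.diff_subset)
      (hint _ (hΩb.subset Set.diff_subset)) (hint _ (hB₂b.subset Set.diff_subset)) hdiff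
    · intro x hx
      have hx2 : x ∉ B₂ := fun hc => hx.2 ⟨hc, hx.1.2⟩
      have hx2' : R₂ ≤ ‖x‖ := le_of_not_gt (fun hc => hx2 ((hmemB₂ x).mpr hc))
      exact hmono (Set.mem_Ioi.mpr hR₂) (Set.mem_Ioi.mpr (lt_of_lt_of_le hR₂ hx2')) hx2'
    · filter_upwards [ae_restrict_mem ((hB₂m.diff hBm).diff (hΩm.diff hBm))] with x hxmem
      have hxR : R ≤ ‖x‖ := le_of_not_gt (fun hc => hxmem.1.2 ((hmemB x).mpr hc))
      have hlt : ‖x‖ < R₂ := (hmemB₂ x).mp hxmem.1.1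
      exact hmono (Set.mem_Ioi.mpr (lt_of_lt_of_le hR hxR)) (Set.mem_Ioi.mpr hR₂) (le_of_lt hlt)
  -- Split Ω
  have hsplitΩ : (∫ x in Ω ∩ B, h ‖x‖) + ∫ x in Ω \ B, h ‖x‖ = ∫ x in Ω, h ‖x‖ :=
    integral_inter_add_diff hBm (hint Ω hΩb)
  have first : (∫ x in Ω, h ‖x‖) ≤ (∫ x in B₁, h ‖x‖) + ∫ x in B₂ \ B, h ‖x‖ := by
    linarith
  refine ⟨first, ?_⟩
  -- Second part
  have hB₁sub : B₁ ⊆ B := by rw [hB, hB₁]; exact Metric.ball_subset_ball h12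
  have hBinter : B ∩ B₁ = B₁ := Set.inter_eq_self_of_subset_right hB₁sub
  have hsplitB : (∫ x in B₁, h ‖x‖) + ∫ x in B \ B₁, h ‖x‖ = ∫ x in B, h ‖x‖ := by
    have := integral_inter_add_diff (f := fun x => h ‖x‖) (μ := volume) hB₁m (hint B hBb)
    rwa [hBinter] at this
  -- measures equal
  have hB₁fin : volume B₁ ≠ ⊤ := hB₁b.measure_lt_top.ne
  have hmeq : volume (B \ B₁) = volume (B₂ \ B) := by
    have h1 : volume (Ω ∩ B) + volume (Ω \ B) = volume Ω := measure_inter_add_diff Ω hBm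
    have h2 : volume (B ∩ B₁) + volume (B \ B₁) = volume B := measure_inter_add_diff B hB₁m
    rw [hBinter] at h2
    rw [hcap, hdiff] at h1
    rw [← h1, ← h2] at hvol
    exact ((ENNReal.add_right_inj hB₁fin).mp hvol).symm
  have hmeqr : (volume (B \ B₁)).toReal = (volume (B₂ \ B)).toReal := by rw [hmeq]
  -- lower bound on B \ B₁
  have hlow : h R * (volume (B \ B₁)).toReal ≤ ∫ x in B \ B₁, h ‖x‖ := by
    calc h R * (volume (B \ B₁)).toReal = ∫ _x in B \ B₁, h R := by
          rw [setIntegral_const, smul_eq_mul, measureReal_def]; ring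
      _ ≤ ∫ x in B \ B₁, h ‖x‖ := by
          apply setIntegral_mono_on
            (integrableOn_const ((measure_mono Set.diff_subset).trans_lt hBb.measure_lt_top).ne)
            ((hint B hBb).mono_set Set.diff_subset) (hBm.diff hB₁m)
          intro x hx
          have hx1 : R₁ ≤ ‖x‖ := le_of_not_gt (fun hc => hx.2 ((hmemB₁ x).mpr hc))
          have hlt : ‖x‖ < R := (hmemB x).mp hx.1
          exact hmono (Set.mem_Ioi.mpr (lt_of_lt_of_le hR₁ hx1)) (Set.mem_Ioi.mpr hR) (le_of_lt hlt)
  -- rewrite RHS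
  have hrhs : (∫ x in B₂ \ B, (h R - h ‖x‖))
      = h R * (volume (B₂ \ B)).toReal - ∫ x in B₂ \ B, h ‖x‖ := by
    rw [integral_sub
      (integrableOn_const (C := h R) ((measure_mono Set.diff_subset).trans_lt hB₂b.measure_lt_top).ne)
      ((hint _ (hB₂b.subset Set.diff_subset)))]
    rw [setIntegral_const, smul_eq_mul, measureReal_def]
    ring
  rw [ge_iff_le, hrhs]
  rw [hmeqr] at hlow
  linarith
end
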